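/- Let n ≥ 2, let F be the n×n matrix with F_{i,i+1} = 1 for i = 1,…,n−1 and all other entries 0, and let D be an n×n diagonal matrix with diagonal vector d := D𝟏 and d_av := 𝟏^T d / n. For a permutation matrix P write D_P := P^T D P. Then the average over all n! permutation matrices P satisfies (1/n!)·∑_{P} P (I − 𝟏 e₁^T)(−2 D_P + D_P F + F^T D_P)(I − e₁ 𝟏^T) P^T = −2·(1 + 1/n)·D + ((3n−2)/(n(n−1)))·( d 𝟏^T + 𝟏 d^T ) − 2·(n/(n−1))·d_av·𝟏𝟏^T. -/

import Mathlib

open Matrix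

/-- The matrix with ones on the superdiagonal. -/
def matF (n : ℕ) : Matrix (Fin n) (Fin n) ℝ :=
  Matrix.of fun i j => if (i : ℕ) + 1 = (j : ℕ) then 1 else 0

/-- The permutation matrix `P` of `σ`, satisfying `P e_j = e_{σ j}`. -/
def permMat {n : ℕ} (σ : Equiv.Perm (Fin n)) : Matrix (Fin n) (Fin n) ℝ :=
  Matrix.of fun i j => if i = σ j then 1 else 0

section aux

lemma sum_perm_zero {m : ℕ} (h : Fin (m+1) → ℝ) :
    ∑ σ : Equiv.Perm (Fin (m+1)), h (σ 0) = (m.factorial : ℝ) * ∑ a, h a := by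
  rw [← Equiv.sum_comp (Equiv.Perm.decomposeFin (n := m)).symm
    (fun σ => h (σ 0)), Fintype.sum_prod_type]
  simp [Equiv.Perm.decomposeFin_symm_apply_zero, Finset.sum_const,
    Fintype.card_perm, Fintype.card_fin, mul_comm, Finset.mul_sum]

lemma sum_perm_zero_one {m : ℕ} (g : Fin (m+2) → Fin (m+2) → ℝ) :
    ∑ σ : Equiv.Perm (Fin (m+2)), g (σ 0) (σ 1)
      = (m.factorial : ℝ) * ∑ a, ∑ b ∈ Finset.univ.erase a, g a b := by
  rw [← Equiv.sum_comp (Equiv.Perm.decomposeFin (n := m+1)).symm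
    (fun σ => g (σ 0) (σ 1)), Fintype.sum_prod_type]
  simp only [Equiv.Perm.decomposeFin_symm_apply_zero,
    Equiv.Perm.decomposeFin_symm_apply_one]
  rw [Finset.mul_sum]
  refine Finset.sum_congr rfl fun a _ => ?_
  rw [sum_perm_zero (fun b => g a (Equiv.swap 0 a b.succ))]
  congr 1
  have key : ∑ b : Fin (m+1), g a (Equiv.swap 0 a b.succ)
      = (∑ c : Fin (m+2), g a (Equiv.swap 0 a c)) - g a (Equiv.swap 0 a 0) := by
    conv_rhs => rw [Fin.sum_univ_succ (f := fun c => g a (Equiv.swap 0 a c))]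
    ring
  rw [key, Equiv.sum_comp (Equiv.swap 0 a) (fun c => g a c), Equiv.swap_apply_left,
    Finset.sum_erase_eq_sub (Finset.mem_univ a)]

lemma sum_perm_pair {m : ℕ} (g : Fin (m+2) → Fin (m+2) → ℝ) (x y : Fin (m+2))
    (hxy : x ≠ y) :
    ∑ σ : Equiv.Perm (Fin (m+2)), g (σ x) (σ y)
      = (m.factorial : ℝ) * ∑ a, ∑ b ∈ Finset.univ.erase a, g a b := by
  set s : Equiv.Perm (Fin (m+2)) := Equiv.swap 0 x with hs
  have hsy0 : s y ≠ 0 := by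
    intro h
    apply hxy
    have h2 := congrArg s h
    rw [Equiv.swap_apply_self] at h2
    simp only [hs] at h2
    rw [h2, Equiv.swap_apply_left]
  set t : Equiv.Perm (Fin (m+2)) := Equiv.swap 1 (s y) with ht
  set τ : Equiv.Perm (Fin (m+2)) := t.trans s with hτ
  have hτ0 : τ 0 = x := by
    have ht0 : t 0 = 0 := Equiv.swap_apply_of_ne_of_ne (by simp) (Ne.symm hsy0)
    simp [hτ, ht0, hs]
  have hτ1 : τ 1 = y := by
    have ht1 : t 1 = s y := Equiv.swap_apply_left _ _
    simp [hτ, ht1, hs]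
  have := Equiv.sum_comp (Equiv.mulRight τ) (fun σ : Equiv.Perm (Fin (m+2)) => g (σ 0) (σ 1))
  simp only [Equiv.coe_mulRight, Equiv.Perm.coe_mul, Function.comp_apply] at this
  have lhs_eq : ∑ σ : Equiv.Perm (Fin (m+2)), g (σ x) (σ y)
      = ∑ σ : Equiv.Perm (Fin (m+2)), g (σ 0) (σ 1) := by
    rw [← this]
    refine Finset.sum_congr rfl fun σ _ => ?_
    simp [Equiv.Perm.mul_apply, hτ0, hτ1]
  rw [lhs_eq, sum_perm_zero_one]

lemma sum_perm_single {m : ℕ} (h : Fin (m+2) → ℝ) (x : Fin (m+2)) :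
    ∑ σ : Equiv.Perm (Fin (m+2)), h (σ x) = ((m+1).factorial : ℝ) * ∑ a, h a := by
  have hxy : x ≠ (if x = 0 then 1 else 0) := by
    split <;> simp_all
  rw [sum_perm_pair (fun a _ => h a) x _ hxy]
  have : ∀ a : Fin (m+2), ∑ _b ∈ Finset.univ.erase a, h a = (m+1 : ℝ) * h a := by
    intro a
    rw [Finset.sum_const, Finset.card_erase_of_mem (Finset.mem_univ a)]
    simp [Fintype.card_fin]
  simp only [this, Nat.factorial_succ]
  rw [← Finset.mul_sum]
  push_cast
  ring

lemma permMat_mul_apply {n : ℕ} (σ : Equiv.Perm (Fin n)) (X : Matrix (Fin n) (Fin n) ℝ)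
    (i j : Fin n) : (permMat σ * X) i j = X (σ⁻¹ i) j := by
  simp only [Matrix.mul_apply, permMat, Matrix.of_apply, ite_mul, one_mul, zero_mul]
  have : ∀ k : Fin n, (i = σ k) ↔ (σ⁻¹ i = k) := fun k => by
    constructor <;> intro h
    · simp [h]
    · rw [← h]; simp
  simp only [this]
  simp

lemma mul_permMatT_apply {n : ℕ} (σ : Equiv.Perm (Fin n)) (X : Matrix (Fin n) (Fin n) ℝ)
    (i j : Fin n) : (X * (permMat σ)ᵀ) i j = X i (σ⁻¹ j) := by
  simp only [Matrix.mul_apply, Matrix.transpose_apply, permMat, Matrix.of_apply,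
    mul_ite, mul_one, mul_zero]
  have : ∀ k : Fin n, (j = σ k) ↔ (σ⁻¹ j = k) := fun k => by
    constructor <;> intro h
    · simp [h]
    · rw [← h]; simp
  simp only [this]
  simp

lemma permMatT_mul_apply {n : ℕ} (σ : Equiv.Perm (Fin n)) (X : Matrix (Fin n) (Fin n) ℝ)
    (i j : Fin n) : ((permMat σ)ᵀ * X) i j = X (σ i) j := by
  simp only [Matrix.mul_apply, Matrix.transpose_apply, permMat, Matrix.of_apply,
    ite_mul, one_mul, zero_mul]
  simp [eq_comm]

lemma DP_apply {n : ℕ} (σ : Equiv.Perm (Fin n)) (d : Fin n → ℝ) (k l : Fin n) :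
    ((permMat σ)ᵀ * Matrix.diagonal d * permMat σ) k l
      = if k = l then d (σ k) else 0 := by
  rw [Matrix.mul_assoc, permMatT_mul_apply]
  simp only [Matrix.mul_apply, Matrix.diagonal_apply, permMat, Matrix.of_apply]
  rw [Finset.sum_eq_single (σ k)]
  · simp [Equiv.apply_eq_iff_eq, eq_comm]
  · intro b _ hb; simp [Ne.symm hb]
  · simp

lemma A_apply {n : ℕ} (σ : Equiv.Perm (Fin n)) (d : Fin n → ℝ) (k l : Fin n) :
    ((-2 : ℝ) • ((permMat σ)ᵀ * Matrix.diagonal d * permMat σ)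
      + ((permMat σ)ᵀ * Matrix.diagonal d * permMat σ) * matF n
      + (matF n)ᵀ * ((permMat σ)ᵀ * Matrix.diagonal d * permMat σ)) k l
    = -2 * d (σ k) * (if k = l then 1 else 0)
      + d (σ k) * (if (k : ℕ) + 1 = (l : ℕ) then 1 else 0)
      + d (σ l) * (if (l : ℕ) + 1 = (k : ℕ) then 1 else 0) := by
  have h1 : (((permMat σ)ᵀ * Matrix.diagonal d * permMat σ) * matF n) k l
      = d (σ k) * (if (k : ℕ) + 1 = (l : ℕ) then 1 else 0) := by
    rw [Matrix.mul_apply, Finset.sum_eq_single k]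
    · rw [DP_apply]; simp [matF]
    · intro b _ hb; rw [DP_apply]; simp [Ne.symm hb]
    · simp
  have h2 : ((matF n)ᵀ * ((permMat σ)ᵀ * Matrix.diagonal d * permMat σ)) k l
      = d (σ l) * (if (l : ℕ) + 1 = (k : ℕ) then 1 else 0) := by
    rw [Matrix.mul_apply, Finset.sum_eq_single l]
    · rw [DP_apply]; simp [matF, mul_comm]
    · intro b _ hb; rw [DP_apply]; simp [hb]
    · simp
  simp only [Matrix.add_apply, Matrix.smul_apply, h1, h2, DP_apply, smul_eq_mul]
  split <;> ring

lemma QXQ_apply {n : ℕ} (z : Fin n) (X : Matrix (Fin n) (Fin n) ℝ) (k l : Fin n) :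
    (((((1 : Matrix (Fin n) (Fin n) ℝ) - Matrix.vecMulVec (fun _ => (1:ℝ)) (Pi.single z (1:ℝ))) * X *
      ((1 : Matrix (Fin n) (Fin n) ℝ) - Matrix.vecMulVec (Pi.single z (1:ℝ)) (fun _ => (1:ℝ)))) : Matrix (Fin n) (Fin n) ℝ)) k l
      = X k l - X z l - X k z + X z z := by
  simp only [Matrix.sub_mul, Matrix.mul_sub, Matrix.one_mul, Matrix.mul_one]
  have hv : ∀ (Y : Matrix (Fin n) (Fin n) ℝ) (a b : Fin n),
      (Matrix.vecMulVec (fun _ => (1:ℝ)) (Pi.single z 1) * Y) a b = Y z b := by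
    intro Y a b
    simp only [Matrix.mul_apply, Matrix.vecMulVec_apply, one_mul, Pi.single_apply,
      ite_mul, one_mul, zero_mul]
    simp
  have hw : ∀ (Y : Matrix (Fin n) (Fin n) ℝ) (a b : Fin n),
      (Y * Matrix.vecMulVec (Pi.single z 1) (fun _ => (1:ℝ))) a b = Y a z := by
    intro Y a b
    simp only [Matrix.mul_apply, Matrix.vecMulVec_apply, mul_one, Pi.single_apply,
      mul_ite, mul_one, mul_zero]
    simp
  simp only [Matrix.sub_apply, hv, hw]
  ring

lemma count_succ {m : ℕ} :
    ∑ a : Fin (m+2), ∑ b ∈ Finset.univ.erase a, (if (a:ℕ)+1 = (b:ℕ) then (1:ℝ) else 0)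
      = (m+1 : ℝ) := by
  have inner : ∀ a : Fin (m+2), ∑ b ∈ Finset.univ.erase a, (if (a:ℕ)+1 = (b:ℕ) then (1:ℝ) else 0)
      = if (a:ℕ) < m+1 then 1 else 0 := by
    intro a
    rw [Finset.sum_erase _ (by simp)]
    by_cases h : (a:ℕ) < m+1
    · rw [Finset.sum_eq_single (⟨(a:ℕ)+1, by omega⟩ : Fin (m+2))]
      · simp [h]
      · intro b _ hb
        have hne : ¬((a:ℕ)+1 = (b:ℕ)) := by
          intro hh; apply hb; exact Fin.ext hh.symm
        simp [hne]
      · simp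
    · rw [if_neg h]
      refine Finset.sum_eq_zero fun b _ => ?_
      have hne : ¬((a:ℕ)+1 = (b:ℕ)) := by have := b.isLt; omega
      simp [hne]
  simp only [inner]
  rw [Fin.sum_univ_eq_sum_range (fun k => if k < m+1 then (1:ℝ) else 0),
    Finset.sum_range_succ]
  rw [Finset.sum_congr rfl (fun k hk => if_pos (Finset.mem_range.1 hk))]
  simp

lemma sum_ite_mem_erase {m : ℕ} (d : Fin (m+2) → ℝ) (j : Fin (m+2)) :
    ∑ a : Fin (m+2), (if j ∈ Finset.univ.erase a then d a else 0)
      = (∑ a, d a) - d j := by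
  have : ∀ a : Fin (m+2), (if j ∈ Finset.univ.erase a then d a else 0)
      = d a - (if j = a then d a else 0) := by
    intro a
    by_cases h : j = a
    · simp [h]
    · simp [h, Finset.mem_erase]
  simp only [this]
  rw [Finset.sum_sub_distrib]
  congr 1
  simp

end aux

set_option maxHeartbeats 1600000 in
theorem average_Oeps_term (n : ℕ) (hn : 2 ≤ n) (d : Fin n → ℝ)
    (dav : ℝ) (hdav : dav = (∑ i, d i) / n) :
    ((n.factorial : ℝ))⁻¹ •
        ∑ σ : Equiv.Perm (Fin n),
          permMat σ *
            ((1 : Matrix (Fin n) (Fin n) ℝ)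
              - Matrix.vecMulVec (fun _ => 1) (Pi.single (⟨0, by omega⟩ : Fin n) 1)) *
            ((-2 : ℝ) • ((permMat σ)ᵀ * Matrix.diagonal d * permMat σ)
              + ((permMat σ)ᵀ * Matrix.diagonal d * permMat σ) * matF n
              + (matF n)ᵀ * ((permMat σ)ᵀ * Matrix.diagonal d * permMat σ)) *
            ((1 : Matrix (Fin n) (Fin n) ℝ)
              - Matrix.vecMulVec (Pi.single (⟨0, by omega⟩ : Fin n) 1) (fun _ => 1)) *
            (permMat σ)ᵀ
      = (-2 * (1 + 1 / (n : ℝ))) • Matrix.diagonal d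
        + ((3 * (n : ℝ) - 2) / ((n : ℝ) * ((n : ℝ) - 1))) •
            (Matrix.vecMulVec d (fun _ => 1) + Matrix.vecMulVec (fun _ => 1) d)
        - (2 * ((n : ℝ) / ((n : ℝ) - 1)) * dav) •
            Matrix.vecMulVec (fun _ => 1) (fun _ => 1) := by
  obtain ⟨m, rfl⟩ : ∃ m, n = m + 2 := ⟨n - 2, by omega⟩
  have hz : (⟨0, by omega⟩ : Fin (m+2)) = 0 := by ext; simp
  rw [hz]
  have hsummand : ∀ (σ : Equiv.Perm (Fin (m+2))) (i j : Fin (m+2)),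
      ((permMat σ *
        ((1 : Matrix (Fin (m+2)) (Fin (m+2)) ℝ)
          - Matrix.vecMulVec (fun _ => 1) (Pi.single (0 : Fin (m+2)) 1)) *
        ((-2 : ℝ) • ((permMat σ)ᵀ * Matrix.diagonal d * permMat σ)
          + ((permMat σ)ᵀ * Matrix.diagonal d * permMat σ) * matF (m+2)
          + (matF (m+2))ᵀ * ((permMat σ)ᵀ * Matrix.diagonal d * permMat σ)) *
        ((1 : Matrix (Fin (m+2)) (Fin (m+2)) ℝ)
          - Matrix.vecMulVec (Pi.single (0 : Fin (m+2)) 1) (fun _ => 1)) *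
        (permMat σ)ᵀ : Matrix (Fin (m+2)) (Fin (m+2)) ℝ)) i j
      = -2 * d i * (if i = j then 1 else 0)
        + d i * (if ((σ⁻¹ i : Fin (m+2)) : ℕ) + 1 = ((σ⁻¹ j : Fin (m+2)) : ℕ) then 1 else 0)
        + d j * (if ((σ⁻¹ j : Fin (m+2)) : ℕ) + 1 = ((σ⁻¹ i : Fin (m+2)) : ℕ) then 1 else 0)
        + 2 * d j * (if j = σ 0 then 1 else 0)
        + 2 * d i * (if i = σ 0 then 1 else 0)
        + (-(d (σ 0) * (if j = σ 1 then 1 else 0)))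
        + (-(d (σ 0) * (if i = σ 1 then 1 else 0)))
        + (-(2 * d (σ 0))) := by
    intro σ i j
    rw [mul_permMatT_apply, Matrix.mul_assoc, Matrix.mul_assoc, ← Matrix.mul_assoc _ _ ((1 : Matrix (Fin (m+2)) (Fin (m+2)) ℝ) - _), permMat_mul_apply, QXQ_apply, A_apply, A_apply, A_apply, A_apply]
    have h1 : ∀ x y : Fin (m+2), σ⁻¹ x = σ⁻¹ y ↔ x = y := fun x y => (Equiv.injective _).eq_iff
    have h2 : ∀ x : Fin (m+2), σ⁻¹ x = 0 ↔ x = σ 0 := fun x => Equiv.symm_apply_eq σ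
    have h2' : ∀ x : Fin (m+2), (0 : Fin (m+2)) = σ⁻¹ x ↔ x = σ 0 := fun x => by
      rw [eq_comm]; exact h2 x
    have h3 : ∀ x : Fin (m+2), (1 : ℕ) = ((σ⁻¹ x : Fin (m+2)) : ℕ) ↔ x = σ 1 := fun x => by
      rw [eq_comm]
      constructor
      · intro h
        have hx : σ⁻¹ x = 1 := Fin.ext (by simpa [Fin.val_one] using h)
        exact (Equiv.symm_apply_eq σ).1 hx
      · intro h
        rw [h]
        simp [Fin.val_one]
    simp only [Equiv.apply_symm_apply, Fin.val_zero, zero_add, Nat.succ_ne_zero, if_false,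
      h1, h2, h2', h3, eq_self_iff_true, if_true]
    by_cases hj0 : j = σ 0 <;> by_cases hi0 : i = σ 0 <;> simp [hj0, hi0] <;> ring
  have h01 : (0 : Fin (m+2)) ≠ 1 := by
    intro h
    have := congrArg Fin.val h
    simp [Fin.val_one] at this
  set S := ∑ a, d a with hS
  ext i j
  rw [Matrix.smul_apply, Matrix.sum_apply]
  rw [Finset.sum_congr rfl (fun σ _ => hsummand σ i j)]
  simp only [Finset.sum_add_distrib, Finset.sum_neg_distrib]
  have H1 : ∑ _σ : Equiv.Perm (Fin (m+2)), (-2 * d i * (if i = j then (1:ℝ) else 0))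
      = ((m+2).factorial : ℝ) * (-2 * d i * (if i = j then 1 else 0)) := by
    rw [Finset.sum_const]
    simp [Fintype.card_perm, Fintype.card_fin, mul_comm]
  have H2 : ∑ σ : Equiv.Perm (Fin (m+2)),
        (d i * (if ((σ⁻¹ i : Fin (m+2)) : ℕ) + 1 = ((σ⁻¹ j : Fin (m+2)) : ℕ) then (1:ℝ) else 0))
      = if i = j then 0 else (m.factorial : ℝ) * ((m+1 : ℝ) * d i) := by
    rw [← Equiv.sum_comp (Equiv.inv (Equiv.Perm (Fin (m+2))))
      (fun σ : Equiv.Perm (Fin (m+2)) =>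
        d i * (if ((σ⁻¹ i : Fin (m+2)) : ℕ) + 1 = ((σ⁻¹ j : Fin (m+2)) : ℕ) then (1:ℝ) else 0))]
    simp only [Equiv.inv_apply, inv_inv]
    by_cases hij : i = j
    · subst hij
      rw [if_pos rfl]
      exact Finset.sum_eq_zero fun σ _ => by simp
    · rw [if_neg hij,
        sum_perm_pair (fun a b => d i * (if (a:ℕ)+1 = (b:ℕ) then (1:ℝ) else 0)) i j hij]
      congr 1
      calc ∑ a : Fin (m+2), ∑ b ∈ Finset.univ.erase a,
            d i * (if (a:ℕ)+1 = (b:ℕ) then (1:ℝ) else 0)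
          = d i * ∑ a : Fin (m+2), ∑ b ∈ Finset.univ.erase a,
              (if (a:ℕ)+1 = (b:ℕ) then (1:ℝ) else 0) := by
            rw [Finset.mul_sum]
            exact Finset.sum_congr rfl fun a _ => by rw [Finset.mul_sum]
        _ = (m+1 : ℝ) * d i := by rw [count_succ]; ring
  have H3 : ∑ σ : Equiv.Perm (Fin (m+2)),
        (d j * (if ((σ⁻¹ j : Fin (m+2)) : ℕ) + 1 = ((σ⁻¹ i : Fin (m+2)) : ℕ) then (1:ℝ) else 0))
      = if i = j then 0 else (m.factorial : ℝ) * ((m+1 : ℝ) * d j) := by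
    rw [← Equiv.sum_comp (Equiv.inv (Equiv.Perm (Fin (m+2))))
      (fun σ : Equiv.Perm (Fin (m+2)) =>
        d j * (if ((σ⁻¹ j : Fin (m+2)) : ℕ) + 1 = ((σ⁻¹ i : Fin (m+2)) : ℕ) then (1:ℝ) else 0))]
    simp only [Equiv.inv_apply, inv_inv]
    by_cases hij : i = j
    · subst hij
      rw [if_pos rfl]
      exact Finset.sum_eq_zero fun σ _ => by simp
    · rw [if_neg hij,
        sum_perm_pair (fun a b => d j * (if (a:ℕ)+1 = (b:ℕ) then (1:ℝ) else 0)) j i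
          (Ne.symm hij)]
      congr 1
      calc ∑ a : Fin (m+2), ∑ b ∈ Finset.univ.erase a,
            d j * (if (a:ℕ)+1 = (b:ℕ) then (1:ℝ) else 0)
          = d j * ∑ a : Fin (m+2), ∑ b ∈ Finset.univ.erase a,
              (if (a:ℕ)+1 = (b:ℕ) then (1:ℝ) else 0) := by
            rw [Finset.mul_sum]
            exact Finset.sum_congr rfl fun a _ => by rw [Finset.mul_sum]
        _ = (m+1 : ℝ) * d j := by rw [count_succ]; ring
  have H4 : ∑ σ : Equiv.Perm (Fin (m+2)), (2 * d j * (if j = σ 0 then (1:ℝ) else 0))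
      = ((m+1).factorial : ℝ) * (2 * d j) := by
    rw [sum_perm_single (fun a => 2 * d j * (if j = a then (1:ℝ) else 0)) 0]
    congr 1
    rw [← Finset.mul_sum, Finset.sum_ite_eq]
    simp
  have H6 : ∑ σ : Equiv.Perm (Fin (m+2)), (2 * d i * (if i = σ 0 then (1:ℝ) else 0))
      = ((m+1).factorial : ℝ) * (2 * d i) := by
    rw [sum_perm_single (fun a => 2 * d i * (if i = a then (1:ℝ) else 0)) 0]
    congr 1
    rw [← Finset.mul_sum, Finset.sum_ite_eq]
    simp
  have H5 : ∑ σ : Equiv.Perm (Fin (m+2)), (d (σ 0) * (if j = σ 1 then (1:ℝ) else 0))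
      = (m.factorial : ℝ) * (S - d j) := by
    rw [sum_perm_pair (fun a b => d a * (if j = b then (1:ℝ) else 0)) 0 1 h01]
    congr 1
    have inner : ∀ a : Fin (m+2), ∑ b ∈ Finset.univ.erase a, d a * (if j = b then (1:ℝ) else 0)
        = if j ∈ Finset.univ.erase a then d a else 0 := by
      intro a
      rw [← Finset.mul_sum, Finset.sum_ite_eq]
      split <;> simp
    simp only [inner]
    exact sum_ite_mem_erase d j
  have H7 : ∑ σ : Equiv.Perm (Fin (m+2)), (d (σ 0) * (if i = σ 1 then (1:ℝ) else 0))
      = (m.factorial : ℝ) * (S - d i) := by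
    rw [sum_perm_pair (fun a b => d a * (if i = b then (1:ℝ) else 0)) 0 1 h01]
    congr 1
    have inner : ∀ a : Fin (m+2), ∑ b ∈ Finset.univ.erase a, d a * (if i = b then (1:ℝ) else 0)
        = if i ∈ Finset.univ.erase a then d a else 0 := by
      intro a
      rw [← Finset.mul_sum, Finset.sum_ite_eq]
      split <;> simp
    simp only [inner]
    exact sum_ite_mem_erase d i
  have H8 : ∑ σ : Equiv.Perm (Fin (m+2)), (2 * d (σ 0))
      = ((m+1).factorial : ℝ) * (2 * S) := by
    rw [sum_perm_single (fun a => 2 * d a) 0]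
    congr 1
    rw [Finset.mul_sum]
  rw [H1, H2, H3, H4, H6, H5, H7, H8]
  subst hdav
  simp only [Matrix.add_apply, Matrix.sub_apply, Matrix.smul_apply, Matrix.vecMulVec_apply,
    Matrix.diagonal_apply, smul_eq_mul, mul_one, one_mul]
  have hfac2 : ((m+2).factorial : ℝ) = ((m:ℝ)+2) * ((m:ℝ)+1) * (m.factorial : ℝ) := by
    rw [show m+2 = (m+1)+1 from rfl, Nat.factorial_succ, Nat.factorial_succ]
    push_cast
    ring
  have hfac1 : ((m+1).factorial : ℝ) = ((m:ℝ)+1) * (m.factorial : ℝ) := by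
    rw [Nat.factorial_succ]
    push_cast
    ring
  have hm0 : (m.factorial : ℝ) ≠ 0 := Nat.cast_ne_zero.2 (Nat.factorial_ne_zero m)
  have ha1 : ((m:ℝ)+1) ≠ 0 := by positivity
  have ha2 : ((m:ℝ)+2) ≠ 0 := by positivity
  have hcast : ((m+2 : ℕ) : ℝ) = (m:ℝ) + 2 := by push_cast; ring
  rw [hfac2, hfac1, hcast]
  rcases eq_or_ne i j with h | h
  · subst h
    simp only [if_pos rfl, eq_self_iff_true, ↓reduceIte]
    rw [show ((m:ℝ)+2)-1 = (m:ℝ)+1 from by ring]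
    field_simp
    ring
  · simp only [if_neg h, if_neg (fun hh => h hh)]
    rw [show ((m:ℝ)+2)-1 = (m:ℝ)+1 from by ring]
    field_simp
    ring
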